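/- Let g, h be probability densities on △ with ‖log(g/h)‖_∞ < ∞. Then for any κ ∈ ℝ, ∫_△ (g-h)^2/g ≤ exp(2(‖log(g/h) - κ‖_∞ - κ)) ∫_△ g (log(g/h) - κ)^2. -/
import Mathlib


open MeasureTheory Real

def simplexD (d : ℕ) : Set (Fin d → ℝ) :=
  {x | (∀ i, x i ∈ Set.Icc (0:ℝ) 1) ∧ ∀ i j : Fin d, i ≤ j → x i ≤ x j}

noncomputable def qMeas (d i : ℕ) : Measure ℝ :=
  volume.withDensity (fun t => ENNReal.ofReal
    (Set.indicator (Set.Icc (0:ℝ) 1)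
      (fun s => (1-s)^(d-i) * s^(i-1) / ((d-i).factorial * (i-1).factorial)) t))

lemma abs_one_sub_exp_neg (u : ℝ) : |1 - Real.exp (-u)| ≤ |u| * Real.exp |u| := by
  rcases le_or_gt 0 u with hu | hu
  · have h1 : 1 - u ≤ Real.exp (-u) := by linarith [Real.add_one_le_exp (-u)]
    have h2 : Real.exp (-u) ≤ 1 := by
      rw [Real.exp_le_one_iff]; linarith
    rw [abs_of_nonneg (by linarith), abs_of_nonneg hu]
    have h3 : (1:ℝ) ≤ Real.exp u := Real.one_le_exp hu
    nlinarith
  · have h1 : u + 1 ≤ Real.exp u := Real.add_one_le_exp u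
    have hmul : Real.exp (-u) * Real.exp u = 1 := by
      rw [← Real.exp_add]; simp
    have h2 : 1 ≤ Real.exp (-u) := by
      rw [Real.one_le_exp_iff]; linarith
    rw [abs_of_nonpos (by linarith), abs_of_neg hu]
    have h3 := Real.exp_pos (-u)
    nlinarith

lemma key_pt (a b κ M : ℝ) (ha : 0 < a) (hb : 0 < b)
    (hM : |Real.log (a/b) - κ| ≤ M) :
    (a-b)^2/a + 2*(Real.exp (-κ)-1)*(a-b) + (Real.exp (-κ)-1)^2 * a
      ≤ Real.exp (2*(M-κ)) * (a * (Real.log (a/b) - κ)^2) := by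
  set u := Real.log (a/b) - κ with hu
  have hba : b/a = Real.exp (-κ) * Real.exp (-u) := by
    rw [← Real.exp_add]
    have : -κ + -u = -(Real.log (a/b)) := by rw [hu]; ring
    rw [this, Real.exp_neg, Real.exp_log (div_pos ha hb), inv_div]
  have hLHS : (a-b)^2/a + 2*(Real.exp (-κ)-1)*(a-b) + (Real.exp (-κ)-1)^2 * a
      = a * (Real.exp (-κ) - b/a)^2 := by
    field_simp
    ring
  have key : (1 - Real.exp (-u))^2 ≤ u^2 * Real.exp (2*M) := by
    have h2 := abs_one_sub_exp_neg u
    have h3 : Real.exp |u| ≤ Real.exp M := Real.exp_le_exp.2 hM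
    calc (1 - Real.exp (-u))^2 = |1 - Real.exp (-u)|^2 := (sq_abs _).symm
      _ ≤ (|u| * Real.exp |u|)^2 := by
          apply pow_le_pow_left₀ (abs_nonneg _) h2
      _ = u^2 * (Real.exp |u|)^2 := by rw [mul_pow, sq_abs]
      _ ≤ u^2 * Real.exp (2*M) := by
          have : (Real.exp |u|)^2 ≤ Real.exp (2*M) := by
            rw [show (2:ℝ)*M = M + M by ring, Real.exp_add, sq]
            exact mul_le_mul h3 h3 (Real.exp_pos _).le (Real.exp_pos _).le
          exact mul_le_mul_of_nonneg_left this (sq_nonneg _)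
  have hexp : Real.exp (2*(M-κ)) = Real.exp (2*M) * (Real.exp (-κ))^2 := by
    rw [sq, ← Real.exp_add, ← Real.exp_add]; ring_nf
  rw [hLHS, hba]
  have hstep : a * (Real.exp (-κ) - Real.exp (-κ) * Real.exp (-u))^2
      = a * (Real.exp (-κ))^2 * (1 - Real.exp (-u))^2 := by ring
  rw [hstep, hexp]
  have hnn : 0 ≤ a * (Real.exp (-κ))^2 := mul_nonneg ha.le (sq_nonneg _)
  calc a * (Real.exp (-κ))^2 * (1 - Real.exp (-u))^2
      ≤ a * (Real.exp (-κ))^2 * (u^2 * Real.exp (2*M)) :=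
        mul_le_mul_of_nonneg_left key hnn
    _ = Real.exp (2*M) * (Real.exp (-κ))^2 * (a * u^2) := by ring

lemma simplexD_measurable (d : ℕ) : MeasurableSet (simplexD d) := by
  have : simplexD d = (⋂ i, {x : Fin d → ℝ | x i ∈ Set.Icc (0:ℝ) 1}) ∩
      (⋂ i, ⋂ j, ⋂ (_ : i ≤ j), {x : Fin d → ℝ | x i ≤ x j}) := by
    ext x
    simp only [simplexD, Set.mem_setOf_eq, Set.mem_inter_iff, Set.mem_iInter]
  rw [this]
  exact (MeasurableSet.iInter fun i =>
      (measurable_pi_apply i) measurableSet_Icc).inter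
    (MeasurableSet.iInter fun i => MeasurableSet.iInter fun j =>
      MeasurableSet.iInter fun _ =>
        measurableSet_le (measurable_pi_apply i) (measurable_pi_apply j))

/-- Lemma: chi-square type bound. -/
theorem statement3 (d : ℕ) (hd : 2 ≤ d) (g h : (Fin d → ℝ) → ℝ)
    (hgm : Measurable g) (hhm : Measurable h)
    (hgpos : ∀ x ∈ simplexD d, 0 < g x) (hhpos : ∀ x ∈ simplexD d, 0 < h x)
    (hg1 : ∫ x in simplexD d, g x = 1) (hh1 : ∫ x in simplexD d, h x = 1)
    (B : ℝ) (hB : ∀ x ∈ simplexD d, |Real.log (g x / h x)| ≤ B)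
    (κ M : ℝ) (hM : ∀ x ∈ simplexD d, |Real.log (g x / h x) - κ| ≤ M) :
    ∫ x in simplexD d, (g x - h x)^2 / g x
      ≤ Real.exp (2*(M - κ)) * ∫ x in simplexD d, g x * (Real.log (g x / h x) - κ)^2 := by
  have hSmeas : MeasurableSet (simplexD d) := simplexD_measurable d
  set c := Real.exp (-κ) - 1 with hc
  -- integrability of g and h
  have hg_int : IntegrableOn g (simplexD d) := by
    by_contra hcon
    rw [integral_undef hcon] at hg1; norm_num at hg1
  have hh_int : IntegrableOn h (simplexD d) := by
    by_contra hcon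
    rw [integral_undef hcon] at hh1; norm_num at hh1
  -- bound h ≤ exp B * g on simplex
  have hh_le : ∀ x ∈ simplexD d, h x ≤ Real.exp B * g x := by
    intro x hx
    have hgx := hgpos x hx
    have hhx := hhpos x hx
    have hlog : Real.log (h x / g x) = -Real.log (g x / h x) := by
      rw [← Real.log_inv, inv_div]
    have h1 : Real.log (h x / g x) ≤ B := by
      rw [hlog]; linarith [abs_le.1 (hB x hx)]
    have h2 : h x / g x ≤ Real.exp B := by
      calc h x / g x = Real.exp (Real.log (h x / g x)) :=
            (Real.exp_log (div_pos hhx hgx)).symm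
        _ ≤ Real.exp B := Real.exp_le_exp.2 h1
    calc h x = (h x / g x) * g x := by field_simp
      _ ≤ Real.exp B * g x := mul_le_mul_of_nonneg_right h2 hgx.le
  -- integrability of f1 := (g-h)^2/g
  have hf1m : Measurable (fun x => (g x - h x)^2 / g x) :=
    ((hgm.sub hhm).pow_const 2).div hgm
  have hf1_int : IntegrableOn (fun x => (g x - h x)^2 / g x) (simplexD d) := by
    apply Integrable.mono' (hg_int.const_mul ((1 + Real.exp B)^2))
      hf1m.aestronglyMeasurable
    rw [ae_restrict_iff' hSmeas]
    filter_upwards with x hx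
    have hgx := hgpos x hx
    have hhx := hhpos x hx
    have hle := hh_le x hx
    rw [Real.norm_eq_abs, abs_of_nonneg (div_nonneg (sq_nonneg _) hgx.le),
      div_le_iff₀ hgx]
    nlinarith [Real.exp_pos B]
  -- integrability of f2 := g * (log(g/h) - κ)^2
  have hf2m : Measurable (fun x => g x * (Real.log (g x / h x) - κ)^2) :=
    hgm.mul (((Real.measurable_log.comp (hgm.div hhm)).sub measurable_const).pow_const 2)
  have hf2_int : IntegrableOn (fun x => g x * (Real.log (g x / h x) - κ)^2) (simplexD d) := by
    apply Integrable.mono' (hg_int.const_mul (M^2)) hf2m.aestronglyMeasurable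
    rw [ae_restrict_iff' hSmeas]
    filter_upwards with x hx
    have hgx := hgpos x hx
    have hMx := hM x hx
    have h1 : (Real.log (g x / h x) - κ)^2 ≤ M^2 := by
      nlinarith [sq_abs (Real.log (g x / h x) - κ), abs_nonneg (Real.log (g x / h x) - κ)]
    rw [Real.norm_eq_abs, abs_of_nonneg (mul_nonneg hgx.le (sq_nonneg _))]
    calc g x * (Real.log (g x / h x) - κ)^2 ≤ g x * M^2 :=
          mul_le_mul_of_nonneg_left h1 hgx.le
      _ = M^2 * g x := by ring
  -- setintegral mono
  have hint_lhs : IntegrableOn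
      (fun x => (g x - h x)^2 / g x + 2*c*(g x - h x) + c^2 * g x) (simplexD d) :=
    (hf1_int.add ((hg_int.sub hh_int).const_mul (2*c))).add (hg_int.const_mul (c^2))
  have hmono : ∫ x in simplexD d,
        ((g x - h x)^2 / g x + 2*c*(g x - h x) + c^2 * g x)
      ≤ ∫ x in simplexD d,
        Real.exp (2*(M-κ)) * (g x * (Real.log (g x / h x) - κ)^2) := by
    apply setIntegral_mono_on hint_lhs (hf2_int.const_mul _) hSmeas
    intro x hx
    exact key_pt (g x) (h x) κ M (hgpos x hx) (hhpos x hx) (hM x hx)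
  have e1 : ∫ x in simplexD d,
        ((g x - h x)^2 / g x + 2*c*(g x - h x) + c^2 * g x)
      = (∫ x in simplexD d, ((g x - h x)^2 / g x + 2*c*(g x - h x)))
        + ∫ x in simplexD d, c^2 * g x :=
    integral_add (hf1_int.add ((hg_int.sub hh_int).const_mul (2*c)))
      (hg_int.const_mul (c^2))
  have e2 : ∫ x in simplexD d, ((g x - h x)^2 / g x + 2*c*(g x - h x))
      = (∫ x in simplexD d, (g x - h x)^2 / g x)
        + ∫ x in simplexD d, 2*c*(g x - h x) :=
    integral_add hf1_int ((hg_int.sub hh_int).const_mul (2*c))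
  have e3 : ∫ x in simplexD d, c^2 * g x = c^2 := by
    rw [integral_const_mul, hg1, mul_one]
  have e4 : ∫ x in simplexD d, 2*c*(g x - h x) = 0 := by
    rw [integral_const_mul, integral_sub hg_int hh_int, hg1, hh1]
    ring
  have e5 : ∫ x in simplexD d,
        Real.exp (2*(M-κ)) * (g x * (Real.log (g x / h x) - κ)^2)
      = Real.exp (2*(M-κ)) * ∫ x in simplexD d,
        g x * (Real.log (g x / h x) - κ)^2 := integral_const_mul _ _
  rw [e1, e2, e3, e4, e5] at hmono
  have hcsq : (0:ℝ) ≤ c^2 := sq_nonneg c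
  clear_value c
  linarith
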